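/- For any positive real numbers p, q with 0 < p < 1, 0 < q < 1, p ≠ q, and any positive integer δ₁, the sum ∑_{k=2}^{δ₁+1} ((1-p)^{k-1} - (1-q)^{k-1})/(q-p) + ∑_{k=δ₁+2}^{∞} ((1-p)^{δ₁} - (1-q)^{δ₁})·(1-p)^{k-δ₁-1}/(q-p) equals (1 - (1-q)^{δ₁})/(pq). -/

import Mathlib

lemma icc_sum_pow (x : ℝ) (n : ℕ) :
    ∑ k ∈ Finset.Icc 2 (n + 1), x ^ (k - 1) = x * ∑ i ∈ Finset.range n, x ^ i := by
  induction n with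
  | zero => simp
  | succ m ih =>
    rw [Finset.sum_Icc_succ_top (by omega : 2 ≤ m + 1 + 1), ih, Finset.sum_range_succ]
    ring_nf
    rw [show 2 + m - 1 = m + 1 by omega, pow_succ]
    ring

theorem stmt_0 (p q : ℝ) (δ₁ : ℕ)
    (hp : 0 < p) (hp1 : p < 1) (hq : 0 < q) (hq1 : q < 1) (hpq : p ≠ q)
    (hδ₁ : 1 ≤ δ₁) :
    (∑ k ∈ Finset.Icc 2 (δ₁ + 1), ((1 - p) ^ (k - 1) - (1 - q) ^ (k - 1)) / (q - p))
      + (∑' j : ℕ, ((1 - p) ^ δ₁ - (1 - q) ^ δ₁) * (1 - p) ^ (j + 1) / (q - p))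
    = (1 - (1 - q) ^ δ₁) / (p * q) := by
  have hp0 : (0:ℝ) ≤ 1 - p := by linarith
  have hp1' : (1:ℝ) - p < 1 := by linarith
  have hgeo : ∑' j : ℕ, (1 - p) ^ j = 1 / p := by
    rw [tsum_geometric_of_lt_one hp0 hp1']
    norm_num
  have htsum : (∑' j : ℕ, ((1 - p) ^ δ₁ - (1 - q) ^ δ₁) * (1 - p) ^ (j + 1) / (q - p))
      = ((1 - p) ^ δ₁ - (1 - q) ^ δ₁) * (1 - p) / (q - p) * (1 / p) := by
    rw [← hgeo, ← tsum_mul_left]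
    congr 1; ext j; rw [pow_succ]; ring
  rw [htsum]
  have hsplit : (∑ k ∈ Finset.Icc 2 (δ₁ + 1), ((1 - p) ^ (k - 1) - (1 - q) ^ (k - 1)) / (q - p))
      = ((∑ k ∈ Finset.Icc 2 (δ₁ + 1), (1 - p) ^ (k - 1))
        - (∑ k ∈ Finset.Icc 2 (δ₁ + 1), (1 - q) ^ (k - 1))) / (q - p) := by
    rw [← Finset.sum_div, Finset.sum_sub_distrib]
  rw [hsplit, icc_sum_pow, icc_sum_pow,
    geom_sum_eq (by intro h; linarith [h] : (1:ℝ) - p ≠ 1),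
    geom_sum_eq (by intro h; linarith [h] : (1:ℝ) - q ≠ 1)]
  have hqp : q - p ≠ 0 := fun h => hpq (by linarith)
  have hpne : p ≠ 0 := ne_of_gt hp
  have hqne : q ≠ 0 := ne_of_gt hq
  have h1 : (1:ℝ) - p - 1 = -p := by ring
  have h2 : (1:ℝ) - q - 1 = -q := by ring
  rw [h1, h2]
  field_simp [hqp, hpne, hqne, sub_ne_zero]
  ring
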